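/- The algebra Ũ_χ admits a Hopf K-algebra structure (Δ, ε, S) such that for all a ∈ Λ and i ∈ I: Δ(K_a) = K_a ⊗ K_a, Δ(L_a) = L_a ⊗ L_a, Δ(E_i) = E_i ⊗ 1 + K_{α_i} ⊗ E_i, Δ(F_i) = F_i ⊗ L_{α_i} + 1 ⊗ F_i, S(K_a) = K_{−a}, S(L_a) = L_{−a}, S(E_i) = −K_{−α_i} E_i, S(F_i) = −F_i L_{−α_i}, ε(K_a) = ε(L_a) = 1, ε(E_i) = ε(F_i) = 0. -/

import Mathlib

open scoped TensorProduct

/-- Generators of the algebra `Ũ_χ`. -/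
inductive QGen (Λ I : Type) : Type
  | Kg : Λ → QGen Λ I
  | Lg : Λ → QGen Λ I
  | Eg : I → QGen Λ I
  | Fg : I → QGen Λ I

/-- The free algebra on the generators. -/
abbrev FA (K : Type) [Field K] (Λ I : Type) := FreeAlgebra K (QGen Λ I)

section Defs

variable {K : Type} [Field K] {Λ I : Type} [AddCommGroup Λ]

def gK (a : Λ) : FA K Λ I := FreeAlgebra.ι K (QGen.Kg a)
def gL (a : Λ) : FA K Λ I := FreeAlgebra.ι K (QGen.Lg a)
def gE (i : I) : FA K Λ I := FreeAlgebra.ι K (QGen.Eg i)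
def gF (i : I) : FA K Λ I := FreeAlgebra.ι K (QGen.Fg i)

variable (χ : Λ → Λ → Kˣ) (α : I → Λ)

/-- The defining relations of `Ũ_χ`. -/
inductive URel : FA K Λ I → FA K Λ I → Prop
  | K0 : URel (gK (0 : Λ)) 1
  | L0 : URel (gL (0 : Λ)) 1
  | KK (a b : Λ) : URel (gK a * gK b) (gK (a + b))
  | LL (a b : Λ) : URel (gL a * gL b) (gL (a + b))
  | KL (a b : Λ) : URel (gK a * gL b) (gL b * gK a)
  | KE (a : Λ) (i : I) : URel (gK a * gE i) ((χ a (α i) : K) • (gE i * gK a))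
  | KF (a : Λ) (i : I) : URel (gK a * gF i) ((((χ a (α i))⁻¹ : Kˣ) : K) • (gF i * gK a))
  | LE (a : Λ) (i : I) : URel (gL a * gE i) ((((χ (α i) a)⁻¹ : Kˣ) : K) • (gE i * gL a))
  | LF (a : Λ) (i : I) : URel (gL a * gF i) ((χ (α i) a : K) • (gF i * gL a))
  | EFsame (i : I) : URel (gE i * gF i - gF i * gE i) (-gK (α i) + gL (α i))
  | EFne (i j : I) (h : i ≠ j) : URel (gE i * gF j - gF j * gE i) 0

/-- The algebra `Ũ_χ`. -/
abbrev Util := RingQuot (URel χ α)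

def uK (a : Λ) : Util χ α := RingQuot.mkAlgHom K (URel χ α) (gK a)
def uL (a : Λ) : Util χ α := RingQuot.mkAlgHom K (URel χ α) (gL a)
def uE (i : I) : Util χ α := RingQuot.mkAlgHom K (URel χ α) (gE i)
def uF (i : I) : Util χ α := RingQuot.mkAlgHom K (URel χ α) (gF i)

end Defs

namespace Stmt8Aux

variable {K : Type} [Field K] {Λ I : Type} [AddCommGroup Λ]
variable (χ : Λ → Λ → Kˣ) (α : I → Λ)

lemma urel {r s : FA K Λ I} (h : URel χ α r s) :
    RingQuot.mkAlgHom K (URel χ α) r = RingQuot.mkAlgHom K (URel χ α) s :=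
  RingQuot.mkAlgHom_rel K h

lemma uK0 : uK χ α (0:Λ) = 1 := by simpa [uK] using urel χ α URel.K0
lemma uL0 : uL χ α (0:Λ) = 1 := by simpa [uL] using urel χ α URel.L0
lemma uKK (a b : Λ) : uK χ α a * uK χ α b = uK χ α (a+b) := by
  simpa [uK, map_mul] using urel χ α (URel.KK a b)
lemma uLL (a b : Λ) : uL χ α a * uL χ α b = uL χ α (a+b) := by
  simpa [uL, map_mul] using urel χ α (URel.LL a b)
lemma uKL (a b : Λ) : uK χ α a * uL χ α b = uL χ α b * uK χ α a := by
  simpa [uK, uL, map_mul] using urel χ α (URel.KL a b)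
lemma uKE (a : Λ) (i : I) :
    uK χ α a * uE χ α i = (χ a (α i) : K) • (uE χ α i * uK χ α a) := by
  simpa [uK, uE, map_mul, map_smul] using urel χ α (URel.KE a i)
lemma uKF (a : Λ) (i : I) :
    uK χ α a * uF χ α i = (((χ a (α i))⁻¹ : Kˣ) : K) • (uF χ α i * uK χ α a) := by
  simpa [uK, uF, map_mul, map_smul] using urel χ α (URel.KF a i)
lemma uLE (a : Λ) (i : I) :
    uL χ α a * uE χ α i = (((χ (α i) a)⁻¹ : Kˣ) : K) • (uE χ α i * uL χ α a) := by
  simpa [uL, uE, map_mul, map_smul] using urel χ α (URel.LE a i)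
lemma uLF (a : Λ) (i : I) :
    uL χ α a * uF χ α i = (χ (α i) a : K) • (uF χ α i * uL χ α a) := by
  simpa [uL, uF, map_mul, map_smul] using urel χ α (URel.LF a i)
lemma uEF (i : I) :
    uE χ α i * uF χ α i - uF χ α i * uE χ α i = -uK χ α (α i) + uL χ α (α i) := by
  simpa [uK, uL, uE, uF, map_mul, map_sub, map_add, map_neg] using urel χ α (URel.EFsame i)
lemma uEFne {i j : I} (h : i ≠ j) :
    uE χ α i * uF χ α j = uF χ α j * uE χ α i := by
  have := urel χ α (URel.EFne i j h)
  simp only [map_sub, map_mul, map_zero, sub_eq_zero] at this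
  simpa [uE, uF, map_mul] using this

/-- flip a scaled commutation relation -/
lemma smul_flip {M : Type} [AddCommMonoid M] [Module K M] (c : Kˣ) {x y : M}
    (h : x = (c : K) • y) : y = ((c⁻¹ : Kˣ) : K) • x := by
  rw [h, smul_smul, Units.inv_mul, one_smul]

lemma uEK (a : Λ) (i : I) :
    uE χ α i * uK χ α a = (((χ a (α i))⁻¹ : Kˣ) : K) • (uK χ α a * uE χ α i) :=
  smul_flip _ (uKE χ α a i)
lemma uFK (a : Λ) (i : I) :
    uF χ α i * uK χ α a = (χ a (α i) : K) • (uK χ α a * uF χ α i) := by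
  simpa using smul_flip _ (uKF χ α a i)
lemma uEL (a : Λ) (i : I) :
    uE χ α i * uL χ α a = (χ (α i) a : K) • (uL χ α a * uE χ α i) := by
  simpa using smul_flip _ (uLE χ α a i)
lemma uFL (a : Λ) (i : I) :
    uF χ α i * uL χ α a = (((χ (α i) a)⁻¹ : Kˣ) : K) • (uL χ α a * uF χ α i) :=
  smul_flip _ (uLF χ α a i)

section chi

lemma χ0l (hχ1 : ∀ a b c : Λ, χ (a + b) c = χ a c * χ b c) (c : Λ) : χ 0 c = 1 := by
  have h := hχ1 0 0 c
  rw [add_zero] at h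
  exact (left_eq_mul.mp h)

lemma χnl (hχ1 : ∀ a b c : Λ, χ (a + b) c = χ a c * χ b c) (a c : Λ) : χ (-a) c = (χ a c)⁻¹ := by
  have h := hχ1 a (-a) c
  rw [add_neg_cancel, χ0l χ hχ1] at h
  exact (inv_eq_of_mul_eq_one_right h.symm).symm

lemma χ0r (hχ2 : ∀ a b c : Λ, χ a (b + c) = χ a b * χ a c) (a : Λ) : χ a 0 = 1 := by
  have h := hχ2 a 0 0
  rw [add_zero] at h
  exact (left_eq_mul.mp h)

lemma χnr (hχ2 : ∀ a b c : Λ, χ a (b + c) = χ a b * χ a c) (a c : Λ) : χ a (-c) = (χ a c)⁻¹ := by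
  have h := hχ2 a c (-c)
  rw [add_neg_cancel, χ0r χ hχ2] at h
  exact (inv_eq_of_mul_eq_one_right h.symm).symm

end chi


section Delta

lemma uFE (i : I) :
    uF χ α i * uE χ α i = uE χ α i * uF χ α i - (-uK χ α (α i) + uL χ α (α i)) := by
  have h := uEF χ α i
  rw [sub_eq_iff_eq_add] at h
  rw [h]; abel

noncomputable def dGen : QGen Λ I → Util χ α ⊗[K] Util χ α
  | QGen.Kg a => uK χ α a ⊗ₜ uK χ α a
  | QGen.Lg a => uL χ α a ⊗ₜ uL χ α a
  | QGen.Eg i => uE χ α i ⊗ₜ 1 + uK χ α (α i) ⊗ₜ uE χ α i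
  | QGen.Fg i => uF χ α i ⊗ₜ uL χ α (α i) + 1 ⊗ₜ uF χ α i

lemma drel ⦃x y : FA K Λ I⦄ (h : URel χ α x y) :
    FreeAlgebra.lift K (dGen χ α) x = FreeAlgebra.lift K (dGen χ α) y := by
  induction h with
  | K0 => simp [gK, dGen, uK0, Algebra.TensorProduct.one_def]
  | L0 => simp [gL, dGen, uL0, Algebra.TensorProduct.one_def]
  | KK a b => simp [gK, dGen, Algebra.TensorProduct.tmul_mul_tmul, uKK]
  | LL a b => simp [gL, dGen, Algebra.TensorProduct.tmul_mul_tmul, uLL]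
  | KL a b => simp [gK, gL, dGen, Algebra.TensorProduct.tmul_mul_tmul, uKL]
  | KE a i =>
      simp [gK, gE, dGen, mul_add, add_mul, Algebra.TensorProduct.tmul_mul_tmul,
        uKE, uKK, TensorProduct.smul_tmul', TensorProduct.tmul_smul, smul_add, add_comm]
  | KF a i =>
      simp [gK, gF, dGen, mul_add, add_mul, Algebra.TensorProduct.tmul_mul_tmul,
        uKF, uKL, TensorProduct.smul_tmul', TensorProduct.tmul_smul, smul_add]
  | LE a i =>
      simp [gL, gE, dGen, mul_add, add_mul, Algebra.TensorProduct.tmul_mul_tmul,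
        uLE, uKL, TensorProduct.smul_tmul', TensorProduct.tmul_smul, smul_add]
  | LF a i =>
      simp [gL, gF, dGen, mul_add, add_mul, Algebra.TensorProduct.tmul_mul_tmul,
        uLF, uLL, TensorProduct.smul_tmul', TensorProduct.tmul_smul, smul_add, add_comm]
  | EFsame i =>
      simp only [map_sub, map_add, map_neg, map_mul, FreeAlgebra.lift_ι_apply,
        gK, gL, gE, gF, dGen, mul_add, add_mul, Algebra.TensorProduct.tmul_mul_tmul,
        one_mul, mul_one, uFE, uFK, uEL, TensorProduct.smul_tmul', TensorProduct.tmul_smul,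
        TensorProduct.sub_tmul, TensorProduct.tmul_sub, TensorProduct.add_tmul, TensorProduct.tmul_add, TensorProduct.neg_tmul, TensorProduct.tmul_neg, uKK, uLL, uKL]
      abel
  | EFne i j hij =>
      simp only [map_sub, map_add, map_mul, map_zero, FreeAlgebra.lift_ι_apply,
        gK, gL, gE, gF, dGen, mul_add, add_mul, Algebra.TensorProduct.tmul_mul_tmul,
        one_mul, mul_one, uEFne χ α hij, uFK, uEL, TensorProduct.smul_tmul', TensorProduct.tmul_smul,
        TensorProduct.sub_tmul, TensorProduct.tmul_sub, TensorProduct.add_tmul, TensorProduct.tmul_add, TensorProduct.neg_tmul, TensorProduct.tmul_neg]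
      abel

noncomputable def Dmap : Util χ α →ₐ[K] Util χ α ⊗[K] Util χ α :=
  RingQuot.liftAlgHom K ⟨FreeAlgebra.lift K (dGen χ α), drel χ α⟩

lemma Dmap_uK (a : Λ) : Dmap χ α (uK χ α a) = uK χ α a ⊗ₜ uK χ α a := by
  rw [uK, Dmap, RingQuot.liftAlgHom_mkAlgHom_apply, gK, FreeAlgebra.lift_ι_apply]; rfl
lemma Dmap_uL (a : Λ) : Dmap χ α (uL χ α a) = uL χ α a ⊗ₜ uL χ α a := by
  rw [uL, Dmap, RingQuot.liftAlgHom_mkAlgHom_apply, gL, FreeAlgebra.lift_ι_apply]; rfl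
lemma Dmap_uE (i : I) :
    Dmap χ α (uE χ α i) = uE χ α i ⊗ₜ 1 + uK χ α (α i) ⊗ₜ uE χ α i := by
  rw [uE, Dmap, RingQuot.liftAlgHom_mkAlgHom_apply, gE, FreeAlgebra.lift_ι_apply]; rfl
lemma Dmap_uF (i : I) :
    Dmap χ α (uF χ α i) = uF χ α i ⊗ₜ uL χ α (α i) + 1 ⊗ₜ uF χ α i := by
  rw [uF, Dmap, RingQuot.liftAlgHom_mkAlgHom_apply, gF, FreeAlgebra.lift_ι_apply]; rfl

def eGen : QGen Λ I → K
  | QGen.Kg _ => 1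
  | QGen.Lg _ => 1
  | QGen.Eg _ => 0
  | QGen.Fg _ => 0

lemma erel ⦃x y : FA K Λ I⦄ (h : URel χ α x y) :
    FreeAlgebra.lift K (eGen : QGen Λ I → K) x = FreeAlgebra.lift K eGen y := by
  induction h with
  | _ => simp [gK, gL, gE, gF, eGen]

noncomputable def Emap : Util χ α →ₐ[K] K :=
  RingQuot.liftAlgHom K ⟨FreeAlgebra.lift K eGen, erel χ α⟩

lemma Emap_uK (a : Λ) : Emap χ α (uK χ α a) = 1 := by
  rw [uK, Emap, RingQuot.liftAlgHom_mkAlgHom_apply, gK, FreeAlgebra.lift_ι_apply]; rfl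
lemma Emap_uL (a : Λ) : Emap χ α (uL χ α a) = 1 := by
  rw [uL, Emap, RingQuot.liftAlgHom_mkAlgHom_apply, gL, FreeAlgebra.lift_ι_apply]; rfl
lemma Emap_uE (i : I) : Emap χ α (uE χ α i) = 0 := by
  rw [uE, Emap, RingQuot.liftAlgHom_mkAlgHom_apply, gE, FreeAlgebra.lift_ι_apply]; rfl
lemma Emap_uF (i : I) : Emap χ α (uF χ α i) = 0 := by
  rw [uF, Emap, RingQuot.liftAlgHom_mkAlgHom_apply, gF, FreeAlgebra.lift_ι_apply]; rfl

end Delta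


section Antipode

-- specialized algebra lemmas (RingQuot instance unification workaround)
lemma Amul_assoc (x y z : Util χ α) : x * y * z = x * (y * z) := mul_assoc x y z
lemma Aneg_mul (x y : Util χ α) : -x * y = -(x * y) := neg_mul x y
lemma Amul_neg (x y : Util χ α) : x * -y = -(x * y) := mul_neg x y
lemma Aneg_neg (x : Util χ α) : - -x = x := neg_neg x
lemma Asmul_mul (c : K) (x y : Util χ α) : (c • x) * y = c • (x * y) := smul_mul_assoc c x y
lemma Amul_smul (c : K) (x y : Util χ α) : x * (c • y) = c • (x * y) := mul_smul_comm c x y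
lemma Asmul_smul (c d : K) (x : Util χ α) : c • d • x = (c * d) • x := smul_smul c d x
lemma Asmul_neg (c : K) (x : Util χ α) : c • -x = -(c • x) := smul_neg c x
lemma Asmul_add (c : K) (x y : Util χ α) : c • (x + y) = c • x + c • y := smul_add c x y
lemma Asmul_sub (c : K) (x y : Util χ α) : c • (x - y) = c • x - c • y := smul_sub c x y
lemma Aone_smul (x : Util χ α) : (1 : K) • x = x := one_smul K x
lemma Amul_add (x y z : Util χ α) : x * (y + z) = x * y + x * z := mul_add x y z
lemma Aadd_mul (x y z : Util χ α) : (x + y) * z = x * z + y * z := add_mul x y z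
lemma Amul_sub (x y z : Util χ α) : x * (y - z) = x * y - x * z := mul_sub x y z
lemma Asub_mul (x y z : Util χ α) : (x - y) * z = x * z - y * z := sub_mul x y z
lemma Amul_one (x : Util χ α) : x * 1 = x := mul_one x
lemma Aone_mul (x : Util χ α) : 1 * x = x := one_mul x
lemma Asub_neg (x y : Util χ α) : x - -y = x + y := sub_neg_eq_add x y

lemma uLK (a b : Λ) : uL χ α a * uK χ α b = uK χ α b * uL χ α a := (uKL χ α b a).symm
lemma uKKx (a b : Λ) (x : Util χ α) : uK χ α a * (uK χ α b * x) = uK χ α (a+b) * x := by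
  rw [← mul_assoc, uKK]
lemma uLLx (a b : Λ) (x : Util χ α) : uL χ α a * (uL χ α b * x) = uL χ α (a+b) * x := by
  rw [← mul_assoc, uLL]
lemma uLKx (a b : Λ) (x : Util χ α) :
    uL χ α a * (uK χ α b * x) = uK χ α b * (uL χ α a * x) := by
  rw [← mul_assoc, uLK, mul_assoc]
lemma uEKx (a : Λ) (i : I) (x : Util χ α) :
    uE χ α i * (uK χ α a * x) = (((χ a (α i))⁻¹ : Kˣ) : K) • (uK χ α a * (uE χ α i * x)) := by
  rw [← mul_assoc, uEK, smul_mul_assoc, mul_assoc]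
lemma uFKx (a : Λ) (i : I) (x : Util χ α) :
    uF χ α i * (uK χ α a * x) = (χ a (α i) : K) • (uK χ α a * (uF χ α i * x)) := by
  rw [← mul_assoc, uFK, smul_mul_assoc, mul_assoc]
lemma uELx (a : Λ) (i : I) (x : Util χ α) :
    uE χ α i * (uL χ α a * x) = (χ (α i) a : K) • (uL χ α a * (uE χ α i * x)) := by
  rw [← mul_assoc, uEL, smul_mul_assoc, mul_assoc]
lemma uFLx (a : Λ) (i : I) (x : Util χ α) :
    uF χ α i * (uL χ α a * x) = (((χ (α i) a)⁻¹ : Kˣ) : K) • (uL χ α a * (uF χ α i * x)) := by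
  rw [← mul_assoc, uFL, smul_mul_assoc, mul_assoc]

noncomputable def sGen : QGen Λ I → (Util χ α)ᵐᵒᵖ
  | QGen.Kg a => MulOpposite.op (uK χ α (-a))
  | QGen.Lg a => MulOpposite.op (uL χ α (-a))
  | QGen.Eg i => MulOpposite.op (-(uK χ α (-α i) * uE χ α i))
  | QGen.Fg i => MulOpposite.op (-(uF χ α i * uL χ α (-α i)))

variable (hχ1 : ∀ a b c : Λ, χ (a + b) c = χ a c * χ b c)
variable (hχ2 : ∀ a b c : Λ, χ a (b + c) = χ a b * χ a c)

include hχ1 hχ2 in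
lemma srel ⦃x y : FA K Λ I⦄ (h : URel χ α x y) :
    FreeAlgebra.lift K (sGen χ α) x = FreeAlgebra.lift K (sGen χ α) y := by
  induction h with
  | _ =>
    first
    | (simp only [map_mul, map_smul, map_add, map_sub, map_neg, map_one, map_zero,
        FreeAlgebra.lift_ι_apply, gK, gL, gE, gF, sGen,
        ← MulOpposite.op_mul, ← MulOpposite.op_smul, ← MulOpposite.op_add,
        ← MulOpposite.op_sub, ← MulOpposite.op_neg, ← MulOpposite.op_one,
        ← MulOpposite.op_zero, MulOpposite.op_inj]
       simp only [Aneg_mul, Amul_neg, Aneg_neg, Amul_assoc, Asub_neg,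
         uKKx, uLLx, uLKx, uEKx, uFKx, uELx, uFLx, uKK, uLL, uLK, uEK, uFK, uEL, uFL,
         uFE, uEFne χ α ‹_›,
         χnl χ hχ1, χnr χ hχ2, χ0l χ hχ1, χ0r χ hχ2, inv_inv,
         Asmul_smul, Amul_smul, Asmul_mul, Asmul_neg, Asmul_add, Asmul_sub,
         ← Units.val_mul, inv_mul_cancel, mul_inv_cancel, Units.val_one, Aone_smul,
         Amul_sub, Asub_mul, Amul_add, Aadd_mul, Amul_one, Aone_mul,
         neg_add_cancel, add_neg_cancel, neg_add_rev, neg_zero,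
         uK0, uL0, add_comm, add_left_comm, mul_comm, mul_left_comm]
       try abel)
    | (simp only [map_mul, map_smul, map_add, map_sub, map_neg, map_one, map_zero,
        FreeAlgebra.lift_ι_apply, gK, gL, gE, gF, sGen,
        ← MulOpposite.op_mul, ← MulOpposite.op_smul, ← MulOpposite.op_add,
        ← MulOpposite.op_sub, ← MulOpposite.op_neg, ← MulOpposite.op_one,
        ← MulOpposite.op_zero, MulOpposite.op_inj]
       simp only [Aneg_mul, Amul_neg, Aneg_neg, Amul_assoc, Asub_neg,
         uKKx, uLLx, uLKx, uEKx, uFKx, uELx, uFLx, uKK, uLL, uLK, uEK, uFK, uEL, uFL,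
         uFE,
         χnl χ hχ1, χnr χ hχ2, χ0l χ hχ1, χ0r χ hχ2, inv_inv,
         Asmul_smul, Amul_smul, Asmul_mul, Asmul_neg, Asmul_add, Asmul_sub,
         ← Units.val_mul, inv_mul_cancel, mul_inv_cancel, Units.val_one, Aone_smul,
         Amul_sub, Asub_mul, Amul_add, Aadd_mul, Amul_one, Aone_mul,
         neg_add_cancel, add_neg_cancel, neg_add_rev, neg_zero,
         uK0, uL0, add_comm, add_left_comm, mul_comm, mul_left_comm]
       try abel)

noncomputable def Smap : Util χ α →ₐ[K] (Util χ α)ᵐᵒᵖ :=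
  RingQuot.liftAlgHom K ⟨FreeAlgebra.lift K (sGen χ α), srel χ α hχ1 hχ2⟩

noncomputable def Slin : Util χ α →ₗ[K] Util χ α :=
  (MulOpposite.opLinearEquiv K).symm.toLinearMap ∘ₗ (Smap χ α hχ1 hχ2).toLinearMap

lemma Slin_apply (x : Util χ α) :
    Slin χ α hχ1 hχ2 x = MulOpposite.unop (Smap χ α hχ1 hχ2 x) := rfl

lemma Slin_uK (a : Λ) : Slin χ α hχ1 hχ2 (uK χ α a) = uK χ α (-a) := by
  rw [Slin_apply, uK, Smap, RingQuot.liftAlgHom_mkAlgHom_apply, gK, FreeAlgebra.lift_ι_apply]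
  rfl
lemma Slin_uL (a : Λ) : Slin χ α hχ1 hχ2 (uL χ α a) = uL χ α (-a) := by
  rw [Slin_apply, uL, Smap, RingQuot.liftAlgHom_mkAlgHom_apply, gL, FreeAlgebra.lift_ι_apply]
  rfl
lemma Slin_uE (i : I) :
    Slin χ α hχ1 hχ2 (uE χ α i) = -(uK χ α (-α i) * uE χ α i) := by
  rw [Slin_apply, uE, Smap, RingQuot.liftAlgHom_mkAlgHom_apply, gE, FreeAlgebra.lift_ι_apply]
  rfl
lemma Slin_uF (i : I) :
    Slin χ α hχ1 hχ2 (uF χ α i) = -(uF χ α i * uL χ α (-α i)) := by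
  rw [Slin_apply, uF, Smap, RingQuot.liftAlgHom_mkAlgHom_apply, gF, FreeAlgebra.lift_ι_apply]
  rfl

lemma Slin_mul (x y : Util χ α) :
    Slin χ α hχ1 hχ2 (x * y) = Slin χ α hχ1 hχ2 y * Slin χ α hχ1 hχ2 x := by
  simp only [Slin_apply, map_mul, MulOpposite.unop_mul]
lemma Slin_one : Slin χ α hχ1 hχ2 (1 : Util χ α) = 1 := by
  simp only [Slin_apply, map_one, MulOpposite.unop_one]

end Antipode

section Conv

variable (hχ1 : ∀ a b c : Λ, χ (a + b) c = χ a c * χ b c)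
variable (hχ2 : ∀ a b c : Λ, χ a (b + c) = χ a b * χ a c)

lemma mk_K (a : Λ) :
    RingQuot.mkAlgHom K (URel χ α) (FreeAlgebra.ι K (QGen.Kg a)) = uK χ α a := rfl
lemma mk_L (a : Λ) :
    RingQuot.mkAlgHom K (URel χ α) (FreeAlgebra.ι K (QGen.Lg a)) = uL χ α a := rfl
lemma mk_E (i : I) :
    RingQuot.mkAlgHom K (URel χ α) (FreeAlgebra.ι K (QGen.Eg i)) = uE χ α i := rfl
lemma mk_F (i : I) :
    RingQuot.mkAlgHom K (URel χ α) (FreeAlgebra.ι K (QGen.Fg i)) = uF χ α i := rfl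

noncomputable def M1 : Util χ α ⊗[K] Util χ α →ₗ[K] Util χ α :=
  LinearMap.mul' K _ ∘ₗ TensorProduct.map (Slin χ α hχ1 hχ2) LinearMap.id

lemma M1_tmul (x y : Util χ α) :
    M1 χ α hχ1 hχ2 (x ⊗ₜ y) = Slin χ α hχ1 hχ2 x * y := by
  simp [M1, LinearMap.mul'_apply]

noncomputable def M2 : Util χ α ⊗[K] Util χ α →ₗ[K] Util χ α :=
  LinearMap.mul' K _ ∘ₗ TensorProduct.map LinearMap.id (Slin χ α hχ1 hχ2)

lemma M2_tmul (x y : Util χ α) :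
    M2 χ α hχ1 hχ2 (x ⊗ₜ y) = x * Slin χ α hχ1 hχ2 y := by
  simp [M2, LinearMap.mul'_apply]

lemma key1 (c d : Util χ α) (u : Util χ α ⊗[K] Util χ α) :
    M1 χ α hχ1 hχ2 (u * (c ⊗ₜ d))
      = Slin χ α hχ1 hχ2 c * M1 χ α hχ1 hχ2 u * d := by
  induction u using TensorProduct.induction_on with
  | zero => simp
  | tmul a b =>
      simp only [Algebra.TensorProduct.tmul_mul_tmul, M1_tmul, Slin_mul, Amul_assoc]
  | add u v hu hv => simp only [add_mul, map_add, hu, hv, Amul_add, Aadd_mul]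

lemma key2 (c d : Util χ α) (u : Util χ α ⊗[K] Util χ α) :
    M2 χ α hχ1 hχ2 ((c ⊗ₜ d) * u)
      = c * M2 χ α hχ1 hχ2 u * Slin χ α hχ1 hχ2 d := by
  induction u using TensorProduct.induction_on with
  | zero => simp
  | tmul a b =>
      simp only [Algebra.TensorProduct.tmul_mul_tmul, M2_tmul, Slin_mul, Amul_assoc]
  | add u v hu hv => simp only [mul_add, map_add, hu, hv, Amul_add, Aadd_mul]

lemma antipode1 (x : Util χ α) :
    M1 χ α hχ1 hχ2 (Dmap χ α x) = Emap χ α x • (1 : Util χ α) := by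
  obtain ⟨p, rfl⟩ := RingQuot.mkAlgHom_surjective K (URel χ α) x
  induction p using FreeAlgebra.induction with
  | grade0 r =>
      rw [AlgHom.commutes, AlgHom.commutes, AlgHom.commutes]
      rw [Algebra.algebraMap_eq_smul_one, map_smul, Algebra.TensorProduct.one_def, M1_tmul,
        Slin_one, Amul_one, Algebra.algebraMap_self_apply]
  | grade1 g =>
      cases g with
      | Kg a =>
          rw [mk_K, Dmap_uK, M1_tmul, Slin_uK, uKK, neg_add_cancel, uK0, Emap_uK, one_smul]
      | Lg a =>
          rw [mk_L, Dmap_uL, M1_tmul, Slin_uL, uLL, neg_add_cancel, uL0, Emap_uL, one_smul]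
      | Eg i =>
          rw [mk_E, Dmap_uE, map_add, M1_tmul, M1_tmul, Slin_uE, Slin_uK, Emap_uE, zero_smul,
            Aneg_mul, Amul_one, neg_add_cancel]
      | Fg i =>
          rw [mk_F, Dmap_uF, map_add, M1_tmul, M1_tmul, Slin_uF, Slin_one, Emap_uF, zero_smul,
            Aneg_mul, Amul_assoc, uLL, neg_add_cancel, uL0, Amul_one, Aone_mul, neg_add_cancel]
  | mul a b ha hb =>
      rw [map_mul, map_mul (Dmap χ α)]
      have step : ∀ u : Util χ α ⊗[K] Util χ α,
          M1 χ α hχ1 hχ2 (Dmap χ α ((RingQuot.mkAlgHom K (URel χ α)) a) * u)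
            = Emap χ α ((RingQuot.mkAlgHom K (URel χ α)) a) • M1 χ α hχ1 hχ2 u := by
        intro u
        induction u using TensorProduct.induction_on with
        | zero => simp
        | tmul c d =>
            rw [key1, ha, M1_tmul, Amul_smul, Amul_one, Asmul_mul]
        | add u v hu hv => rw [mul_add, map_add, hu, hv, map_add, Asmul_add]
      rw [step, hb, Asmul_smul, ← map_mul]
  | add a b ha hb =>
      rw [map_add, map_add (Dmap χ α), map_add (M1 χ α hχ1 hχ2), ha, hb,
        map_add (Emap χ α), add_smul]

lemma antipode2 (x : Util χ α) :
    M2 χ α hχ1 hχ2 (Dmap χ α x) = Emap χ α x • (1 : Util χ α) := by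
  obtain ⟨p, rfl⟩ := RingQuot.mkAlgHom_surjective K (URel χ α) x
  induction p using FreeAlgebra.induction with
  | grade0 r =>
      rw [AlgHom.commutes, AlgHom.commutes, AlgHom.commutes]
      rw [Algebra.algebraMap_eq_smul_one, map_smul, Algebra.TensorProduct.one_def, M2_tmul,
        Slin_one, Amul_one, Algebra.algebraMap_self_apply]
  | grade1 g =>
      cases g with
      | Kg a =>
          rw [mk_K, Dmap_uK, M2_tmul, Slin_uK, uKK, add_neg_cancel, uK0, Emap_uK, one_smul]
      | Lg a =>
          rw [mk_L, Dmap_uL, M2_tmul, Slin_uL, uLL, add_neg_cancel, uL0, Emap_uL, one_smul]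
      | Eg i =>
          rw [mk_E, Dmap_uE, map_add, M2_tmul, M2_tmul, Slin_uE, Slin_one, Emap_uE, zero_smul,
            Amul_one, Amul_neg, uKKx, add_neg_cancel, uK0, Aone_mul, add_neg_cancel]
      | Fg i =>
          rw [mk_F, Dmap_uF, map_add, M2_tmul, M2_tmul, Slin_uF, Slin_uL, Emap_uF, zero_smul,
            Amul_neg, Aone_mul, add_neg_cancel]
  | mul a b ha hb =>
      rw [map_mul, map_mul (Dmap χ α)]
      have step : ∀ u : Util χ α ⊗[K] Util χ α,
          M2 χ α hχ1 hχ2 (u * Dmap χ α ((RingQuot.mkAlgHom K (URel χ α)) b))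
            = Emap χ α ((RingQuot.mkAlgHom K (URel χ α)) b) • M2 χ α hχ1 hχ2 u := by
        intro u
        induction u using TensorProduct.induction_on with
        | zero => simp
        | tmul c d =>
            rw [key2, hb, M2_tmul, Amul_smul, Amul_one, Asmul_mul]
        | add u v hu hv => rw [add_mul, map_add, hu, hv, map_add, Asmul_add]
      rw [step, ha, Asmul_smul, mul_comm, ← map_mul]
  | add a b ha hb =>
      rw [map_add, map_add (Dmap χ α), map_add (M2 χ α hχ1 hχ2), ha, hb,
        map_add (Emap χ α), add_smul]

end Conv

section Coassoc

lemma coassoc_alg :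
    (Algebra.TensorProduct.assoc K K K (Util χ α) (Util χ α) (Util χ α)).toAlgHom.comp
      ((Algebra.TensorProduct.map (Dmap χ α) (AlgHom.id K (Util χ α))).comp (Dmap χ α))
    = (Algebra.TensorProduct.map (AlgHom.id K (Util χ α)) (Dmap χ α)).comp (Dmap χ α) := by
  apply RingQuot.ringQuot_ext'
  apply FreeAlgebra.hom_ext
  funext g
  cases g <;>
    simp [mk_K, mk_L, mk_E, mk_F, Dmap_uK, Dmap_uL, Dmap_uE, Dmap_uF,
      Algebra.TensorProduct.one_def, TensorProduct.add_tmul, TensorProduct.tmul_add,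
      add_assoc]

lemma counitl_alg :
    (Algebra.TensorProduct.lid K (Util χ α)).toAlgHom.comp
      ((Algebra.TensorProduct.map (Emap χ α) (AlgHom.id K (Util χ α))).comp (Dmap χ α))
    = AlgHom.id K (Util χ α) := by
  apply RingQuot.ringQuot_ext'
  apply FreeAlgebra.hom_ext
  funext g
  cases g <;>
    simp [mk_K, mk_L, mk_E, mk_F, Dmap_uK, Dmap_uL, Dmap_uE, Dmap_uF,
      Emap_uK, Emap_uL, Emap_uE, Emap_uF,
      Algebra.TensorProduct.one_def, TensorProduct.add_tmul, TensorProduct.tmul_add,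
      TensorProduct.zero_tmul]

lemma counitr_alg :
    (Algebra.TensorProduct.rid K K (Util χ α)).toAlgHom.comp
      ((Algebra.TensorProduct.map (AlgHom.id K (Util χ α)) (Emap χ α)).comp (Dmap χ α))
    = AlgHom.id K (Util χ α) := by
  apply RingQuot.ringQuot_ext'
  apply FreeAlgebra.hom_ext
  funext g
  cases g <;>
    simp [mk_K, mk_L, mk_E, mk_F, Dmap_uK, Dmap_uL, Dmap_uE, Dmap_uF,
      Emap_uK, Emap_uL, Emap_uE, Emap_uF,
      Algebra.TensorProduct.one_def, TensorProduct.add_tmul, TensorProduct.tmul_add,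
      TensorProduct.tmul_zero]

end Coassoc

end Stmt8Aux

/-- `Ũ_χ` has a Hopf algebra structure `(Δ, ε, S)` with the
prescribed values on the generators. -/
theorem stmt8 {K : Type} [Field K] {Λ I : Type} [AddCommGroup Λ]
    [Module.Free ℤ Λ] [Module.Finite ℤ Λ] [Fintype I]
    (χ : Λ → Λ → Kˣ) (α : I → Λ)
    (hχ1 : ∀ a b c : Λ, χ (a + b) c = χ a c * χ b c)
    (hχ2 : ∀ a b c : Λ, χ a (b + c) = χ a b * χ a c) :
    ∃ (Δ : Util χ α →ₐ[K] (Util χ α ⊗[K] Util χ α))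
      (ε : Util χ α →ₐ[K] K) (S : Util χ α →ₗ[K] Util χ α),
      -- values on generators
      (∀ a : Λ, Δ (uK χ α a) = uK χ α a ⊗ₜ[K] uK χ α a) ∧
      (∀ a : Λ, Δ (uL χ α a) = uL χ α a ⊗ₜ[K] uL χ α a) ∧
      (∀ i : I, Δ (uE χ α i) = uE χ α i ⊗ₜ[K] 1 + uK χ α (α i) ⊗ₜ[K] uE χ α i) ∧
      (∀ i : I, Δ (uF χ α i) = uF χ α i ⊗ₜ[K] uL χ α (α i) + 1 ⊗ₜ[K] uF χ α i) ∧
      (∀ a : Λ, S (uK χ α a) = uK χ α (-a)) ∧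
      (∀ a : Λ, S (uL χ α a) = uL χ α (-a)) ∧
      (∀ i : I, S (uE χ α i) = -(uK χ α (-(α i)) * uE χ α i)) ∧
      (∀ i : I, S (uF χ α i) = -(uF χ α i * uL χ α (-(α i)))) ∧
      (∀ a : Λ, ε (uK χ α a) = 1) ∧ (∀ a : Λ, ε (uL χ α a) = 1) ∧
      (∀ i : I, ε (uE χ α i) = 0) ∧ (∀ i : I, ε (uF χ α i) = 0) ∧
      -- coassociativity
      (∀ x : Util χ α,
        (TensorProduct.assoc K (Util χ α) (Util χ α) (Util χ α))
            ((TensorProduct.map Δ.toLinearMap LinearMap.id) (Δ x))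
          = (TensorProduct.map LinearMap.id Δ.toLinearMap) (Δ x)) ∧
      -- counit axioms
      (∀ x : Util χ α,
        (TensorProduct.lid K (Util χ α))
            ((TensorProduct.map ε.toLinearMap LinearMap.id) (Δ x)) = x) ∧
      (∀ x : Util χ α,
        (TensorProduct.rid K (Util χ α))
            ((TensorProduct.map LinearMap.id ε.toLinearMap) (Δ x)) = x) ∧
      -- antipode axioms
      (∀ x : Util χ α,
        (LinearMap.mul' K (Util χ α)) ((TensorProduct.map S LinearMap.id) (Δ x))
          = algebraMap K (Util χ α) (ε x)) ∧
      (∀ x : Util χ α,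
        (LinearMap.mul' K (Util χ α)) ((TensorProduct.map LinearMap.id S) (Δ x))
          = algebraMap K (Util χ α) (ε x)) := by
  classical
  refine ⟨Stmt8Aux.Dmap χ α, Stmt8Aux.Emap χ α, Stmt8Aux.Slin χ α hχ1 hχ2,
    Stmt8Aux.Dmap_uK χ α, Stmt8Aux.Dmap_uL χ α, Stmt8Aux.Dmap_uE χ α, Stmt8Aux.Dmap_uF χ α,
    Stmt8Aux.Slin_uK χ α hχ1 hχ2, Stmt8Aux.Slin_uL χ α hχ1 hχ2,
    Stmt8Aux.Slin_uE χ α hχ1 hχ2, Stmt8Aux.Slin_uF χ α hχ1 hχ2,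
    Stmt8Aux.Emap_uK χ α, Stmt8Aux.Emap_uL χ α, Stmt8Aux.Emap_uE χ α, Stmt8Aux.Emap_uF χ α,
    ?co, ?cl, ?cr, ?a1, ?a2⟩
  case co =>
    intro x
    have h1 : TensorProduct.map (Stmt8Aux.Dmap χ α).toLinearMap LinearMap.id
        = (Algebra.TensorProduct.map (Stmt8Aux.Dmap χ α) (AlgHom.id K (Util χ α))).toLinearMap :=
      TensorProduct.ext' fun a b => rfl
    have h2 : TensorProduct.map LinearMap.id (Stmt8Aux.Dmap χ α).toLinearMap
        = (Algebra.TensorProduct.map (AlgHom.id K (Util χ α)) (Stmt8Aux.Dmap χ α)).toLinearMap :=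
      TensorProduct.ext' fun a b => rfl
    have h := DFunLike.congr_fun (Stmt8Aux.coassoc_alg χ α) x
    simp only [AlgHom.coe_comp, Function.comp_apply, AlgEquiv.toAlgHom_eq_coe,
      AlgHom.coe_coe] at h
    rw [h1, h2]
    exact h
  case cl =>
    intro x
    have h3 : TensorProduct.map (Stmt8Aux.Emap χ α).toLinearMap LinearMap.id
        = (Algebra.TensorProduct.map (Stmt8Aux.Emap χ α) (AlgHom.id K (Util χ α))).toLinearMap :=
      TensorProduct.ext' fun a b => rfl
    have h := DFunLike.congr_fun (Stmt8Aux.counitl_alg χ α) x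
    simp only [AlgHom.coe_comp, Function.comp_apply, AlgEquiv.toAlgHom_eq_coe,
      AlgHom.coe_coe, AlgHom.coe_id, id_eq] at h
    rw [h3]
    exact h
  case cr =>
    intro x
    have h4 : TensorProduct.map LinearMap.id (Stmt8Aux.Emap χ α).toLinearMap
        = (Algebra.TensorProduct.map (AlgHom.id K (Util χ α)) (Stmt8Aux.Emap χ α)).toLinearMap :=
      TensorProduct.ext' fun a b => rfl
    have h5 : ∀ z : Util χ α ⊗[K] K,
        (TensorProduct.rid K (Util χ α)) z = (Algebra.TensorProduct.rid K K (Util χ α)) z := by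
      intro z
      induction z using TensorProduct.induction_on with
      | zero => simp
      | tmul a r => simp
      | add u v hu hv => simp [hu, hv]
    have h := DFunLike.congr_fun (Stmt8Aux.counitr_alg χ α) x
    simp only [AlgHom.coe_comp, Function.comp_apply, AlgEquiv.toAlgHom_eq_coe,
      AlgHom.coe_coe, AlgHom.coe_id, id_eq] at h
    rw [h4, h5]
    exact h
  case a1 =>
    intro x
    rw [Algebra.algebraMap_eq_smul_one]
    exact Stmt8Aux.antipode1 χ α hχ1 hχ2 x
  case a2 =>
    intro x
    rw [Algebra.algebraMap_eq_smul_one]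
    exact Stmt8Aux.antipode2 χ α hχ1 hχ2 x
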